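/- A residuated lattice A is quasicomplemented if and only if every prime filter of A that contains no dense element is a minimal prime filter. -/
import Mathlib


/-- A (bounded, integral, commutative) residuated lattice. -/
class ResLattice (A : Type*) extends Lattice A, CommMonoid A, OrderBot A where
  himp : A → A → A
  adjunction : ∀ x y z : A, x * y ≤ z ↔ x ≤ himp y z
  le_one : ∀ x : A, x ≤ 1

variable {A : Type*} [ResLattice A]

/-- Coannihilator of a subset: `X^⊥ = {a | a ⊔ x = 1 for all x ∈ X}`. -/
def Coann (X : Set A) : Set A := {a | ∀ x ∈ X, a ⊔ x = 1}

/-- Coannulet of an element: `x^⊥`. -/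
def rperp (x : A) : Set A := Coann {x}

/-- The principal filter generated by `x`. -/
def PFil (x : A) : Set A := {a | ∃ n : ℕ, 0 < n ∧ x ^ n ≤ a}

/-- Filters of a residuated lattice. -/
def IsRLFilter (F : Set A) : Prop :=
  F.Nonempty ∧ (∀ x ∈ F, ∀ y ∈ F, x * y ∈ F) ∧ (∀ x ∈ F, ∀ y : A, x ⊔ y ∈ F)

/-- Prime filters. -/
def IsRLPrime (P : Set A) : Prop :=
  IsRLFilter P ∧ P ≠ Set.univ ∧ ∀ x y : A, x ⊔ y ∈ P → x ∈ P ∨ y ∈ P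

/-- Minimal prime filters. -/
def IsRLMinPrime (P : Set A) : Prop :=
  IsRLPrime P ∧ ∀ Q : Set A, IsRLPrime Q → Q ⊆ P → Q = P

/-- Quasicomplemented residuated lattice. -/
def Quasicomplemented (A : Type*) [ResLattice A] : Prop :=
  ∀ x : A, ∃ y : A, Coann (rperp x) = rperp y

/-- α-filters. -/
def IsAlphaFilter (F : Set A) : Prop :=
  IsRLFilter F ∧ ∀ x ∈ F, Coann (rperp x) ⊆ F

/-- The α-filter generated by a subset. -/
def alphaGen (X : Set A) : Set A := ⋂₀ {G : Set A | IsAlphaFilter G ∧ X ⊆ G}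

section Helpers

lemma rl_le_one (x : A) : x ≤ 1 := ResLattice.le_one x

lemma rl_eq_one {x : A} (h : (1:A) ≤ x) : x = 1 := le_antisymm (rl_le_one x) h

lemma rl_adj {x y z : A} : x * y ≤ z ↔ x ≤ ResLattice.himp y z := ResLattice.adjunction x y z

lemma rl_mul_mono_left {a b : A} (c : A) (h : a ≤ b) : a * c ≤ b * c :=
  rl_adj.mpr (le_trans h (rl_adj.mp (le_refl (b * c))))

lemma rl_mul_mono {a b c d : A} (h1 : a ≤ b) (h2 : c ≤ d) : a * c ≤ b * d := by
  refine le_trans (rl_mul_mono_left c h1) ?_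
  rw [mul_comm b c, mul_comm b d]; exact rl_mul_mono_left b h2

lemma rl_mul_le_left (a b : A) : a * b ≤ a := by
  have := rl_mul_mono (le_refl a) (rl_le_one b); rwa [mul_one] at this

lemma rl_mul_le_right (a b : A) : a * b ≤ b := by
  rw [mul_comm]; exact rl_mul_le_left b a

lemma rl_sup_mul (a b c : A) : (a ⊔ b) * c = a * c ⊔ b * c := by
  apply eq_of_forall_ge_iff
  intro z
  rw [sup_le_iff, rl_adj, rl_adj, rl_adj, sup_le_iff]

lemma rl_mul_sup (a b c : A) : a * (b ⊔ c) = a * b ⊔ a * c := by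
  rw [mul_comm, rl_sup_mul, mul_comm b a, mul_comm c a]

lemma mem_rperp {a x : A} : a ∈ rperp x ↔ a ⊔ x = 1 := by
  simp [rperp, Coann]

lemma one_mem_rperp (x : A) : (1:A) ∈ rperp x :=
  mem_rperp.mpr (sup_eq_left.mpr (rl_le_one x))

lemma rperp_mul (x y : A) : rperp (x * y) = rperp x ∩ rperp y := by
  ext a
  simp only [Set.mem_inter_iff, mem_rperp]
  constructor
  · intro h
    constructor
    · exact le_antisymm (rl_le_one _) (h ▸ sup_le_sup_left (rl_mul_le_left x y) a)
    · exact le_antisymm (rl_le_one _) (h ▸ sup_le_sup_left (rl_mul_le_right x y) a)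
  · rintro ⟨h1, h2⟩
    refine le_antisymm (rl_le_one _) ?_
    calc (1:A) = (a ⊔ x) * (a ⊔ y) := by rw [h1, h2, one_mul]
    _ ≤ a ⊔ x * y := by
        rw [rl_sup_mul, rl_mul_sup, rl_mul_sup]
        refine sup_le (sup_le ?_ ?_) (sup_le ?_ ?_)
        · exact le_sup_of_le_left (rl_mul_le_left a a)
        · exact le_sup_of_le_left (rl_mul_le_left a y)
        · exact le_sup_of_le_left (rl_mul_le_right x a)
        · exact le_sup_right

lemma rperp_pow {a x : A} (h : a ∈ rperp x) : ∀ n : ℕ, a ∈ rperp (x ^ n)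
  | 0 => by
      rw [pow_zero]
      exact mem_rperp.mpr (sup_eq_right.mpr (rl_le_one a))
  | n + 1 => by
      rw [pow_succ, rperp_mul]
      exact ⟨rperp_pow h n, h⟩

lemma rl_pow_sup_le (u v : A) : ∀ k n m : ℕ, n + m = k → (u ⊔ v) ^ k ≤ u ^ n ⊔ v ^ m := by
  intro k
  induction k with
  | zero =>
      intro n m h
      obtain ⟨rfl, rfl⟩ := Nat.add_eq_zero.mp h
      simp
  | succ k ih =>
      intro n m h
      match n, m with
      | 0, m => rw [pow_zero]; exact le_trans (rl_le_one _) le_sup_left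
      | n + 1, 0 => rw [pow_zero]; exact le_trans (rl_le_one _) le_sup_right
      | n + 1, m + 1 =>
          have hk1 : n + (m + 1) = k := by omega
          have hk2 : (n + 1) + m = k := by omega
          rw [pow_succ, mul_comm, rl_sup_mul]
          refine sup_le ?_ ?_
          · refine le_trans (rl_mul_mono (le_refl u) (ih n (m+1) hk1)) ?_
            rw [rl_mul_sup]
            refine sup_le ?_ ?_
            · exact le_sup_of_le_left (le_of_eq (by rw [mul_comm, ← pow_succ]))
            · exact le_sup_of_le_right (rl_mul_le_right _ _)
          · refine le_trans (rl_mul_mono (le_refl v) (ih (n+1) m hk2)) ?_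
            rw [rl_mul_sup]
            refine sup_le ?_ ?_
            · exact le_sup_of_le_left (rl_mul_le_right _ _)
            · exact le_sup_of_le_right (le_of_eq (by rw [mul_comm, ← pow_succ]))

lemma filt_up {F : Set A} (hF : IsRLFilter F) {a b : A} (ha : a ∈ F) (h : a ≤ b) : b ∈ F := by
  have := hF.2.2 a ha b
  rwa [sup_eq_right.mpr h] at this

lemma filt_one {F : Set A} (hF : IsRLFilter F) : (1:A) ∈ F := by
  obtain ⟨a, ha⟩ := hF.1
  exact filt_up hF ha (rl_le_one a)

lemma filt_pow {F : Set A} (hF : IsRLFilter F) {a : A} (ha : a ∈ F) : ∀ n : ℕ, a ^ (n+1) ∈ F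
  | 0 => by rwa [pow_one]
  | n + 1 => by
      rw [pow_succ]
      exact hF.2.1 _ (filt_pow hF ha n) a ha

/-- The filter generated by a filter `G` and one extra element `u`. -/
def genF (G : Set A) (u : A) : Set A := {a | ∃ p ∈ G, ∃ n : ℕ, p * u ^ n ≤ a}

lemma genF_filter {G : Set A} (hG : IsRLFilter G) (u : A) : IsRLFilter (genF G u) := by
  refine ⟨⟨1, 1, filt_one hG, 0, by rw [pow_zero, mul_one]⟩, ?_, ?_⟩
  · rintro a ⟨p, hp, n, hpn⟩ b ⟨q, hq, m, hqm⟩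
    refine ⟨p * q, hG.2.1 p hp q hq, n + m, ?_⟩
    calc p * q * (u ^ (n+m)) = (p * u ^ n) * (q * u ^ m) := by
          rw [pow_add, mul_mul_mul_comm]
    _ ≤ a * b := rl_mul_mono hpn hqm
  · rintro a ⟨p, hp, n, hpn⟩ y
    exact ⟨p, hp, n, le_trans hpn le_sup_left⟩

lemma subset_genF {G : Set A} (u : A) : G ⊆ genF G u :=
  fun a ha => ⟨a, ha, 0, by rw [pow_zero, mul_one]⟩

lemma mem_genF {G : Set A} (hG : IsRLFilter G) (u : A) : u ∈ genF G u :=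
  ⟨1, filt_one hG, 1, by rw [pow_one, one_mul]⟩

/-- Key Zorn construction: a prime filter extending `F` and avoiding a nonempty
join-closed downset `J`. -/
lemma exists_prime_avoiding {F J : Set A} (hF : IsRLFilter F)
    (hJd : ∀ a ∈ J, ∀ b : A, b ≤ a → b ∈ J)
    (hJs : ∀ a ∈ J, ∀ b ∈ J, a ⊔ b ∈ J)
    (hJn : J.Nonempty)
    (hFJ : ∀ a ∈ F, a ∉ J) :
    ∃ P : Set A, IsRLPrime P ∧ F ⊆ P ∧ ∀ a ∈ P, a ∉ J := by
  set S : Set (Set A) := {G | IsRLFilter G ∧ F ⊆ G ∧ ∀ a ∈ G, a ∉ J} with hS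
  have hub : ∀ c ⊆ S, IsChain (· ⊆ ·) c → c.Nonempty → ∃ ub ∈ S, ∀ s ∈ c, s ⊆ ub := by
    intro c hcS hchain hcne
    obtain ⟨G0, hG0⟩ := hcne
    refine ⟨⋃₀ c, ⟨⟨?_, ?_, ?_⟩, ?_, ?_⟩, fun s hs => Set.subset_sUnion_of_mem hs⟩
    · exact ⟨1, G0, hG0, filt_one (hcS hG0).1⟩
    · rintro a ⟨G1, hG1, ha⟩ b ⟨G2, hG2, hb⟩
      rcases hchain.total hG1 hG2 with h | h
      · exact ⟨G2, hG2, (hcS hG2).1.2.1 a (h ha) b hb⟩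
      · exact ⟨G1, hG1, (hcS hG1).1.2.1 a ha b (h hb)⟩
    · rintro a ⟨G1, hG1, ha⟩ y
      exact ⟨G1, hG1, (hcS hG1).1.2.2 a ha y⟩
    · exact subset_trans (hcS hG0).2.1 (Set.subset_sUnion_of_mem hG0)
    · rintro a ⟨G1, hG1, ha⟩
      exact (hcS hG1).2.2 a ha
  obtain ⟨P, hFP, hPmax⟩ := zorn_subset_nonempty S hub F ⟨hF, subset_rfl, hFJ⟩
  · obtain ⟨hPfil, hFsub, hPJ⟩ := hPmax.prop
    refine ⟨P, ⟨hPfil, ?_, ?_⟩, hFsub, hPJ⟩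
    · intro h
      obtain ⟨j, hj⟩ := hJn
      exact hPJ j (h ▸ Set.mem_univ j) hj
    · intro u v huv
      by_contra hcon
      push_neg at hcon
      obtain ⟨hu, hv⟩ := hcon
      -- genF P u meets J
      have hmeet : ∀ w : A, w ∉ P → ∃ j ∈ J, ∃ p ∈ P, ∃ n : ℕ, p * w ^ (n+1) ≤ j := by
        intro w hw
        have hGS : genF P w ∉ S := by
          intro hmem
          exact hw (hPmax.2 hmem (subset_genF w) (mem_genF hPfil w))
        have hGfil := genF_filter hPfil w
        have hGF : F ⊆ genF P w := subset_trans hFsub (subset_genF w)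
        simp only [hS, Set.mem_setOf_eq] at hGS
        push_neg at hGS
        obtain ⟨j, hjG, hjJ⟩ := hGS hGfil hGF
        obtain ⟨p, hp, n, hpn⟩ := hjG
        refine ⟨j, hjJ, p, hp, n, ?_⟩
        refine le_trans ?_ hpn
        refine rl_mul_mono (le_refl p) ?_
        rw [pow_succ]
        exact rl_mul_le_left _ _
      obtain ⟨j1, hj1, p, hp, n, hpn⟩ := hmeet u hu
      obtain ⟨j2, hj2, q, hq, m, hqm⟩ := hmeet v hv
      have key : p * q * (u ⊔ v) ^ ((n+1) + (m+1)) ≤ j1 ⊔ j2 := by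
        refine le_trans (rl_mul_mono (le_refl (p*q))
          (rl_pow_sup_le u v ((n+1)+(m+1)) (n+1) (m+1) rfl)) ?_
        rw [rl_mul_sup]
        refine sup_le ?_ ?_
        · refine le_sup_of_le_left (le_trans ?_ hpn)
          rw [mul_comm p q, mul_assoc]
          exact rl_mul_le_right _ _
        · refine le_sup_of_le_right (le_trans ?_ hqm)
          rw [mul_assoc]
          exact rl_mul_le_right _ _
      have hmemP : p * q * (u ⊔ v) ^ ((n+1) + (m+1)) ∈ P := by
        refine hPfil.2.1 _ (hPfil.2.1 p hp q hq) _ ?_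
        have : (n+1)+(m+1) = (n+m+1)+1 := by omega
        rw [this]
        exact filt_pow hPfil huv (n+m+1)
      exact hPJ _ (filt_up hPfil hmemP key) (hJs j1 hj1 j2 hj2)

end Helpers

lemma rperp_mul_mem {b d x : A} (hb : b ∈ rperp x) (hd : d ∈ rperp x) :
    b * d ∈ rperp x := by
  rw [mem_rperp] at hb hd ⊢
  refine le_antisymm (rl_le_one _) ?_
  calc (1:A) = (b ⊔ x) * (d ⊔ x) := by rw [hb, hd, one_mul]
  _ ≤ b * d ⊔ x := by
      rw [rl_sup_mul, rl_mul_sup, rl_mul_sup]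
      refine sup_le (sup_le le_sup_left ?_) (sup_le ?_ ?_)
      · exact le_sup_of_le_right (rl_mul_le_right b x)
      · exact le_sup_of_le_right (rl_mul_le_left x d)
      · exact le_sup_of_le_right (rl_mul_le_left x x)

theorem stmt4 :
    Quasicomplemented A ↔
      ∀ P : Set A, IsRLPrime P → (¬ ∃ d ∈ P, rperp d = {1}) → IsRLMinPrime P := by
  constructor
  · -- forward direction
    intro hqc P hP hnd
    refine ⟨hP, fun Q hQ hQP => ?_⟩
    refine Set.Subset.antisymm hQP ?_
    intro x hx
    obtain ⟨y, hy⟩ := hqc x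
    have hxy : x ⊔ y = 1 := by
      have hxmem : x ∈ Coann (rperp x) := by
        intro b hb
        rw [sup_comm]
        exact mem_rperp.mp hb
      rw [hy] at hxmem
      exact mem_rperp.mp hxmem
    have hsupQ : x ⊔ y ∈ Q := by rw [hxy]; exact filt_one hQ.1
    rcases hQ.2.2 x y hsupQ with h | h
    · exact h
    · exfalso
      apply hnd
      refine ⟨x * y, hP.1.2.1 x hx y (hQP h), ?_⟩
      rw [rperp_mul, ← hy]
      ext a
      simp only [Set.mem_inter_iff, Set.mem_singleton_iff]
      constructor
      · rintro ⟨h1, h2⟩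
        have := h2 a h1
        rwa [sup_idem] at this
      · rintro rfl
        exact ⟨one_mem_rperp x, fun z _ => sup_eq_left.mpr (rl_le_one z)⟩
  · -- backward direction
    intro hyp x
    classical
    set F : Set A := {a | ∃ n : ℕ, ∃ b ∈ rperp x, x ^ n * b ≤ a} with hFdef
    have hFfil : IsRLFilter F := by
      refine ⟨⟨1, 0, 1, one_mem_rperp x, rl_le_one _⟩, ?_, ?_⟩
      · rintro a ⟨n, b, hb, hab⟩ c ⟨m, d, hd, hcd⟩
        refine ⟨n + m, b * d, rperp_mul_mem hb hd, ?_⟩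
        calc x ^ (n+m) * (b * d) = (x ^ n * b) * (x ^ m * d) := by
              rw [pow_add, mul_mul_mul_comm]
        _ ≤ a * c := rl_mul_mono hab hcd
      · rintro a ⟨n, b, hb, hab⟩ y
        exact ⟨n, b, hb, le_trans hab le_sup_left⟩
    have hxF : x ∈ F := ⟨1, 1, one_mem_rperp x, by rw [pow_one, mul_one]⟩
    have hperpF : rperp x ⊆ F := fun c hc => ⟨0, c, hc, by rw [pow_zero, one_mul]⟩
    by_cases hFD : ∃ d ∈ F, rperp d = ({1} : Set A)
    · -- dense element in F: extract the witness
      obtain ⟨d, ⟨n, b, hb, hbd⟩, hdD⟩ := hFD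
      refine ⟨b, ?_⟩
      ext a
      constructor
      · intro ha
        exact mem_rperp.mpr (ha b hb)
      · intro ha
        intro c hc
        have hcx : c ⊔ x ^ n = 1 := mem_rperp.mp (rperp_pow hc n)
        have h1 : (1:A) ≤ (a ⊔ c) ⊔ d := by
          calc (1:A) = (a ⊔ b) * (c ⊔ x ^ n) := by rw [mem_rperp.mp ha, hcx, one_mul]
          _ ≤ (a ⊔ c) ⊔ d := by
              rw [rl_sup_mul, rl_mul_sup, rl_mul_sup]
              refine sup_le (sup_le ?_ ?_) (sup_le ?_ ?_)
              · exact le_sup_of_le_left (le_sup_of_le_left (rl_mul_le_left a c))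
              · exact le_sup_of_le_left (le_sup_of_le_left (rl_mul_le_left a _))
              · exact le_sup_of_le_left (le_sup_of_le_right (rl_mul_le_right b c))
              · refine le_sup_of_le_right (le_trans ?_ hbd)
                rw [mul_comm]
        have h2 : (a ⊔ c) ∈ rperp d := mem_rperp.mpr (le_antisymm (rl_le_one _) h1)
        rw [hdD] at h2
        exact h2
    · -- no dense element in F: derive a contradiction
      exfalso
      push_neg at hFD
      set D : Set A := {d | rperp d = ({1} : Set A)} with hDdef
      have hDdown : ∀ a ∈ D, ∀ b : A, b ≤ a → b ∈ D := by
        intro a ha b hba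
        refine Set.Subset.antisymm ?_ ?_
        · intro c hc
          have : c ∈ rperp a := mem_rperp.mpr
            (le_antisymm (rl_le_one _) ((mem_rperp.mp hc) ▸ sup_le_sup_left hba c))
          rw [ha] at this
          exact this
        · rintro c rfl
          exact one_mem_rperp b
      have hDsup : ∀ a ∈ D, ∀ b ∈ D, a ⊔ b ∈ D := by
        intro a ha b hb
        refine Set.Subset.antisymm ?_ ?_
        · intro c hc
          have h1 : (c ⊔ a) ⊔ b = 1 := by rw [sup_assoc]; exact mem_rperp.mp hc
          have h2 : c ⊔ a ∈ rperp b := mem_rperp.mpr h1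
          rw [hb] at h2
          have h3 : c ∈ rperp a := mem_rperp.mpr h2
          rw [ha] at h3
          exact h3
        · rintro c rfl
          exact one_mem_rperp _
      have hDne : D.Nonempty := by
        refine ⟨⊥, ?_⟩
        refine Set.Subset.antisymm ?_ ?_
        · intro c hc
          have := mem_rperp.mp hc
          rwa [sup_bot_eq] at this
        · rintro c rfl
          exact one_mem_rperp _
      have hFDdisj : ∀ a ∈ F, a ∉ D := hFD
      obtain ⟨P, hPprime, hFP, hPD⟩ :=
        exists_prime_avoiding hFfil hDdown hDsup hDne hFDdisj
      have hPmin : IsRLMinPrime P := by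
        refine hyp P hPprime ?_
        rintro ⟨d, hdP, hd⟩
        exact hPD d hdP hd
      obtain ⟨w0, hw0⟩ := (Set.ne_univ_iff_exists_notMem P).mp hPprime.2.1
      set J : Set A := {a | ∃ w : A, w ∉ P ∧ a ≤ x ⊔ w} with hJdef
      have hJdown : ∀ a ∈ J, ∀ b : A, b ≤ a → b ∈ J := by
        rintro a ⟨w, hw, haw⟩ b hba
        exact ⟨w, hw, le_trans hba haw⟩
      have hJsup : ∀ a ∈ J, ∀ b ∈ J, a ⊔ b ∈ J := by
        rintro a ⟨w, hw, haw⟩ b ⟨w', hw', hbw⟩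
        refine ⟨w ⊔ w', ?_, ?_⟩
        · intro hmem
          rcases hPprime.2.2 w w' hmem with h | h
          · exact hw h
          · exact hw' h
        · refine sup_le (le_trans haw (sup_le_sup_left le_sup_left x))
            (le_trans hbw (sup_le_sup_left le_sup_right x))
      have hJne : J.Nonempty := ⟨x, w0, hw0, le_sup_left⟩
      have hOnefil : IsRLFilter ({1} : Set A) := by
        refine ⟨⟨1, rfl⟩, ?_, ?_⟩
        · rintro a rfl b rfl
          rw [one_mul]; rfl
        · rintro a rfl y
          exact sup_eq_left.mpr (rl_le_one y)
      have hOneJ : ∀ a ∈ ({1} : Set A), a ∉ J := by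
        rintro a rfl ⟨w, hw, h1w⟩
        have : w ∈ rperp x := mem_rperp.mpr (by rw [sup_comm]; exact le_antisymm (rl_le_one _) h1w)
        exact hw (hFP (hperpF this))
      obtain ⟨Q, hQprime, _, hQJ⟩ :=
        exists_prime_avoiding hOnefil hJdown hJsup hJne hOneJ
      have hQP : Q ⊆ P := by
        intro a haQ
        by_contra haP
        exact hQJ a haQ ⟨a, haP, le_sup_right⟩
      have hxQ : x ∉ Q := fun hxQ => hQJ x hxQ ⟨w0, hw0, le_sup_left⟩
      have hQeq : Q = P := hPmin.2 Q hQprime hQP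
      exact hxQ (hQeq ▸ hFP hxF)
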